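/- Fix integers n_u ≥ 1, n_c ≥ 1, d ≥ 1 and a constant 0 ≤ c̄ < 1. Let X ⊆ ℝ^d, and let A_c : X → ℝ^{n_c×n_u}, b_c : X → ℝ^{n_c}, c_c : X → ℝ^{n_c} be Lipschitz functions on X such that for every x ∈ X each row of A_c(x) is a unit vector, 0 ≤ (c_c(x))_j ≤ c̄ for all j, and b_c is bounded on X. Suppose that for every x ∈ X and all j ≠ k: (b_c(x))_j/(1 + sgn((b_c(x))_j)·(c_c(x))_j) + (b_c(x))_k/(1 + sgn((b_c(x))_k)·(c_c(x))_k) ≥ 0. Then for every x ∈ X the problem of minimizing ‖u‖ over { u ∈ ℝ^{n_u} : ⟨(A_c(x))_{j,:}, u⟩ ≤ (b_c(x))_j/(1 − (c_c(x))_j) for all j = 1,…,n_c } has a unique solution ρ_s(x); the resulting map ρ_s : X → ℝ^{n_u} is Lipschitz on X; and for every x ∈ X, ρ_s(x) belongs to U_c(x) := { u ∈ ℝ^{n_u} : ⟨(A_c(x))_{j,:}, u⟩ + (c_c(x))_j·‖u‖ ≤ (b_c(x))_j for all j }. -/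

import Mathlib

open scoped RealInnerProductSpace

set_option maxHeartbeats 1000000

/-- Quantitative Lipschitz bound for `b/(1-c)` given Lipschitz bounds on `b`, `c`. -/
lemma stmt12_aux_div (b1 b2 c1 c2 γ M P Q : ℝ) (hγ : 0 < γ)
    (h1 : γ ≤ 1 - c1) (h2 : γ ≤ 1 - c2) (hb2 : |b2| ≤ M)
    (hb : |b1 - b2| ≤ P) (hc : |c1 - c2| ≤ Q) :
    |b1 / (1 - c1) - b2 / (1 - c2)| ≤ P / γ + M * Q / γ ^ 2 := by
  have e1 : (0:ℝ) < 1 - c1 := lt_of_lt_of_le hγ h1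
  have e2 : (0:ℝ) < 1 - c2 := lt_of_lt_of_le hγ h2
  have hid : b1 / (1 - c1) - b2 / (1 - c2) =
      (b1 - b2) / (1 - c1) + b2 * (c1 - c2) / ((1 - c1) * (1 - c2)) := by
    field_simp
    ring
  have hP0 : 0 ≤ P := le_trans (abs_nonneg _) hb
  have hQ0 : 0 ≤ Q := le_trans (abs_nonneg _) hc
  have hM0 : 0 ≤ M := le_trans (abs_nonneg _) hb2
  have t1 : |(b1 - b2) / (1 - c1)| ≤ P / γ := by
    rw [abs_div, abs_of_pos e1]
    exact div_le_div₀ hP0 hb hγ h1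
  have t2 : |b2 * (c1 - c2) / ((1 - c1) * (1 - c2))| ≤ M * Q / γ ^ 2 := by
    rw [abs_div, abs_mul, abs_of_pos (mul_pos e1 e2)]
    have hnum : |b2| * |c1 - c2| ≤ M * Q := mul_le_mul hb2 hc (abs_nonneg _) hM0
    have hden : γ ^ 2 ≤ (1 - c1) * (1 - c2) := by
      have := mul_le_mul h1 h2 hγ.le (by linarith)
      nlinarith
    exact div_le_div₀ (by positivity) hnum (by positivity) hden
  calc |b1 / (1 - c1) - b2 / (1 - c2)|
      ≤ |(b1 - b2) / (1 - c1)| + |b2 * (c1 - c2) / ((1 - c1) * (1 - c2))| := by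
        rw [hid]; exact abs_add_le _ _
    _ ≤ P / γ + M * Q / γ ^ 2 := add_le_add t1 t2

/-- Lemma 5 of the paper (Appendix F): under the compatibility condition (55), the
minimum-norm selection of the linear relaxation of the quadratically constrained
feasible set `U_c(x)` exists, is unique, is Lipschitz on `X` (the data `A_c`, `b_c`,
`c_c` being Lipschitz, the rows of `A_c(x)` unit vectors, `0 ≤ c_c ≤ c̄ < 1`, and
`b_c` bounded), and belongs to `U_c(x)`. -/
theorem stmt12 (n_u n_c d : ℕ) (hnu : 1 ≤ n_u) (hnc : 1 ≤ n_c) (hd : 1 ≤ d)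
    (cbar : ℝ) (hcbar0 : 0 ≤ cbar) (hcbar1 : cbar < 1)
    (X : Set (EuclideanSpace ℝ (Fin d)))
    (a : EuclideanSpace ℝ (Fin d) → Fin n_c → EuclideanSpace ℝ (Fin n_u))
    (b c : EuclideanSpace ℝ (Fin d) → Fin n_c → ℝ)
    (Ka Kb Kc : NNReal)
    (ha_lip : ∀ j, LipschitzOnWith Ka (fun x => a x j) X)
    (hb_lip : ∀ j, LipschitzOnWith Kb (fun x => b x j) X)
    (hc_lip : ∀ j, LipschitzOnWith Kc (fun x => c x j) X)
    (hunit : ∀ x ∈ X, ∀ j, ‖a x j‖ = 1)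
    (hcrange : ∀ x ∈ X, ∀ j, 0 ≤ c x j ∧ c x j ≤ cbar)
    (hbbd : ∃ M : ℝ, ∀ x ∈ X, ∀ j, |b x j| ≤ M)
    (hcompat : ∀ x ∈ X, ∀ j k, j ≠ k →
      0 ≤ b x j / (1 + Real.sign (b x j) * c x j)
        + b x k / (1 + Real.sign (b x k) * c x k)) :
    ∃ ρs : EuclideanSpace ℝ (Fin d) → EuclideanSpace ℝ (Fin n_u),
      (∀ x ∈ X,
        (∀ j, ⟪a x j, ρs x⟫ ≤ b x j / (1 - c x j)) ∧
        (∀ u : EuclideanSpace ℝ (Fin n_u),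
          (∀ j, ⟪a x j, u⟫ ≤ b x j / (1 - c x j)) → ‖ρs x‖ ≤ ‖u‖) ∧
        (∀ u : EuclideanSpace ℝ (Fin n_u),
          (∀ j, ⟪a x j, u⟫ ≤ b x j / (1 - c x j)) → ‖u‖ = ‖ρs x‖ → u = ρs x) ∧
        (∀ j, ⟪a x j, ρs x⟫ + c x j * ‖ρs x‖ ≤ b x j)) ∧
      ∃ K : NNReal, LipschitzOnWith K ρs X := by
  classical
  obtain ⟨M₀, hM₀⟩ := hbbd
  set M : ℝ := max M₀ 0 with hMdef
  have hM : ∀ x ∈ X, ∀ j, |b x j| ≤ M := fun x hx j => (hM₀ x hx j).trans (le_max_left _ _)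
  have hM0 : (0:ℝ) ≤ M := le_max_right _ _
  set γ : ℝ := 1 - cbar with hγdef
  have hγ : (0:ℝ) < γ := by simp only [hγdef]; linarith
  have hγ1 : γ ≤ 1 := by simp only [hγdef]; linarith
  have : Nonempty (Fin n_c) := ⟨⟨0, hnc⟩⟩
  set β : EuclideanSpace ℝ (Fin d) → Fin n_c → ℝ := fun x j => b x j / (1 - c x j) with hβdef
  have hjmex : ∀ x : EuclideanSpace ℝ (Fin d), ∃ j, ∀ k, β x j ≤ β x k :=
    fun x => Finite.exists_min (β x)
  choose jm hjm using hjmex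
  set m : EuclideanSpace ℝ (Fin d) → ℝ := fun x => min (β x (jm x)) 0 with hmdef
  set ρ : EuclideanSpace ℝ (Fin d) → EuclideanSpace ℝ (Fin n_u) :=
    fun x => m x • a x (jm x) with hρdef
  -- basic positivity facts
  have hcγ : ∀ x ∈ X, ∀ j, γ ≤ 1 - c x j := by
    intro x hx j
    have := (hcrange x hx j).2
    simp only [hγdef]; linarith
  have hcpos : ∀ x ∈ X, ∀ j, 0 < 1 - c x j := fun x hx j => lt_of_lt_of_le hγ (hcγ x hx j)
  have hc1 : ∀ x ∈ X, ∀ j, 0 < 1 + c x j := by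
    intro x hx j; have := (hcrange x hx j).1; linarith
  -- sign agreement of b and β
  have hbneg : ∀ x ∈ X, ∀ j, β x j < 0 → b x j < 0 := by
    intro x hx j h
    by_contra hb'
    push_neg at hb'
    exact absurd (div_nonneg hb' (hcpos x hx j).le) (not_le.mpr h)
  have hbpos : ∀ x ∈ X, ∀ j, 0 ≤ β x j → 0 ≤ b x j := by
    intro x hx j h
    by_contra hb'
    push_neg at hb'
    exact absurd (div_neg_of_neg_of_pos hb' (hcpos x hx j)) (not_lt.mpr h)
  -- key consequence of compatibility
  have hkey : ∀ x ∈ X, ∀ j k, j ≠ k → β x j < 0 →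
      0 < b x k ∧ -β x j ≤ b x k / (1 + c x k) := by
    intro x hx j k hjk hβj
    have hbj : b x j < 0 := hbneg x hx j hβj
    have hsj : Real.sign (b x j) = -1 := Real.sign_of_neg hbj
    have hcomp := hcompat x hx j k hjk
    rw [hsj] at hcomp
    have hterm : 0 ≤ β x j + b x k / (1 + Real.sign (b x k) * c x k) := by
      have : (1 : ℝ) + -1 * c x j = 1 - c x j := by ring
      rw [this] at hcomp
      exact hcomp
    rcases lt_trichotomy (b x k) 0 with hk | hk | hk
    · exfalso
      rw [Real.sign_of_neg hk] at hterm
      have : (1 : ℝ) + -1 * c x k = 1 - c x k := by ring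
      rw [this] at hterm
      have hβk : β x k < 0 := div_neg_of_neg_of_pos hk (hcpos x hx k)
      have : b x k / (1 - c x k) = β x k := rfl
      rw [this] at hterm
      linarith
    · exfalso
      rw [hk, Real.sign_zero] at hterm
      simp at hterm
      linarith
    · rw [Real.sign_of_pos hk, one_mul] at hterm
      exact ⟨hk, by linarith⟩
  -- uniqueness of the negative index
  have huniq : ∀ x ∈ X, ∀ j k, β x j < 0 → β x k < 0 → j = k := by
    intro x hx j k hj hk
    by_contra hne
    have := (hkey x hx j k hne hj).1
    have : 0 ≤ β x k := div_nonneg this.le (hcpos x hx k).le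
    linarith
  -- norm of ρ
  have hm0 : ∀ x, m x ≤ 0 := fun x => min_le_right _ _
  have hρnorm : ∀ x ∈ X, ‖ρ x‖ = -m x := by
    intro x hx
    simp only [hρdef, norm_smul, hunit x hx, mul_one, Real.norm_eq_abs,
      abs_of_nonpos (hm0 x)]
  -- feasibility of ρ x
  have hfeas : ∀ x ∈ X, ∀ j, ⟪a x j, ρ x⟫ ≤ β x j := by
    intro x hx j
    rw [hρdef]
    simp only [real_inner_smul_right]
    rcases lt_or_ge (β x (jm x)) 0 with hneg | hpos
    · have hmval : m x = β x (jm x) := min_eq_left hneg.le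
      rcases eq_or_ne j (jm x) with rfl | hne
      · rw [real_inner_self_eq_norm_sq, hunit x hx, hmval]
        norm_num
      · have hk := hkey x hx (jm x) j (fun h => hne h.symm) hneg
        have hCS : |⟪a x j, a x (jm x)⟫| ≤ 1 := by
          have := abs_real_inner_le_norm (a x j) (a x (jm x))
          rwa [hunit x hx, hunit x hx, one_mul] at this
        have h1 : ⟪a x j, a x (jm x)⟫ ≥ -1 := by
          have := (abs_le.mp hCS).1; linarith
        have h2 : m x * ⟪a x j, a x (jm x)⟫ ≤ -m x := by
          nlinarith [hm0 x]
        have h3 : -m x ≤ b x j / (1 + c x j) := by rw [hmval]; exact hk.2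
        have h4 : b x j / (1 + c x j) ≤ b x j / (1 - c x j) :=
          div_le_div_of_nonneg_left hk.1.le (hcpos x hx j)
            (by have := (hcrange x hx j).1; linarith)
        calc m x * ⟪a x j, a x (jm x)⟫ ≤ -m x := h2
          _ ≤ b x j / (1 + c x j) := h3
          _ ≤ β x j := h4
    · have hmval : m x = 0 := min_eq_right hpos
      rw [hmval, zero_mul]
      exact div_nonneg (hbpos x hx j (le_trans hpos (hjm x j))) (hcpos x hx j).le
  -- minimality
  have hmin : ∀ x ∈ X, ∀ u : EuclideanSpace ℝ (Fin n_u),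
      (∀ j, ⟪a x j, u⟫ ≤ β x j) → ‖ρ x‖ ≤ ‖u‖ := by
    intro x hx u hu
    rw [hρnorm x hx]
    rcases lt_or_ge (β x (jm x)) 0 with hneg | hpos
    · have hmval : m x = β x (jm x) := min_eq_left hneg.le
      have h1 : ⟪a x (jm x), u⟫ ≤ m x := by rw [hmval]; exact hu (jm x)
      have h2 : |⟪a x (jm x), u⟫| ≤ ‖u‖ := by
        have := abs_real_inner_le_norm (a x (jm x)) u
        rwa [hunit x hx, one_mul] at this
      have := (abs_le.mp h2).1
      linarith
    · have hmval : m x = 0 := min_eq_right hpos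
      rw [hmval]; simpa using norm_nonneg u
  -- uniqueness of minimizer
  have huniqmin : ∀ x ∈ X, ∀ u : EuclideanSpace ℝ (Fin n_u),
      (∀ j, ⟪a x j, u⟫ ≤ β x j) → ‖u‖ = ‖ρ x‖ → u = ρ x := by
    intro x hx u hu hnorm
    rcases lt_or_ge (β x (jm x)) 0 with hneg | hpos
    · have hmval : m x = β x (jm x) := min_eq_left hneg.le
      have hρn : ‖ρ x‖ = -m x := hρnorm x hx
      have h1 : ⟪a x (jm x), u⟫ ≤ m x := by rw [hmval]; exact hu (jm x)
      have h2 : |⟪a x (jm x), u⟫| ≤ ‖u‖ := by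
        have := abs_real_inner_le_norm (a x (jm x)) u
        rwa [hunit x hx, one_mul] at this
      have h3 : ⟪a x (jm x), u⟫ = m x := by
        have := (abs_le.mp h2).1
        rw [hnorm, hρn] at this
        linarith
      have hinner : ⟪u, ρ x⟫ = m x * m x := by
        rw [hρdef]
        simp only [real_inner_smul_right]
        rw [real_inner_comm, h3]
      have hsq : ‖u - ρ x‖ ^ 2 = 0 := by
        rw [norm_sub_sq_real, hinner, hnorm, hρn]
        ring
      have : u - ρ x = 0 := by
        have := pow_eq_zero_iff (n := 2) (by norm_num) |>.mp (by
          rw [← hsq])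
        exact norm_eq_zero.mp this
      exact sub_eq_zero.mp this
    · have hmval : m x = 0 := min_eq_right hpos
      have hρ0 : ρ x = 0 := by rw [hρdef]; simp [hmval]
      rw [hρ0] at hnorm ⊢
      simpa using norm_eq_zero.mp (by simpa using hnorm)
  -- membership in U_c
  have hUc : ∀ x ∈ X, ∀ j, ⟪a x j, ρ x⟫ + c x j * ‖ρ x‖ ≤ b x j := by
    intro x hx j
    rw [hρnorm x hx]
    rcases lt_or_ge (β x (jm x)) 0 with hneg | hpos
    · have hmval : m x = β x (jm x) := min_eq_left hneg.le
      rcases eq_or_ne j (jm x) with rfl | hne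
      · have hin : ⟪a x (jm x), ρ x⟫ = m x := by
          rw [hρdef]
          simp only [real_inner_smul_right]
          rw [real_inner_self_eq_norm_sq, hunit x hx]
          ring
        rw [hin]
        have hb' : b x (jm x) = β x (jm x) * (1 - c x (jm x)) := by
          show b x (jm x) = b x (jm x) / (1 - c x (jm x)) * (1 - c x (jm x))
          rw [div_mul_cancel₀ _ (ne_of_gt (hcpos x hx (jm x)))]
        rw [hmval, hb']
        nlinarith [hcpos x hx (jm x)]
      · have hk := hkey x hx (jm x) j (fun h => hne h.symm) hneg
        have hCS : |⟪a x j, a x (jm x)⟫| ≤ 1 := by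
          have := abs_real_inner_le_norm (a x j) (a x (jm x))
          rwa [hunit x hx, hunit x hx, one_mul] at this
        have h1 : ⟪a x j, a x (jm x)⟫ ≥ -1 := by
          have := (abs_le.mp hCS).1; linarith
        have hin : ⟪a x j, ρ x⟫ = m x * ⟪a x j, a x (jm x)⟫ := by
          rw [hρdef]; simp only [real_inner_smul_right]
        rw [hin]
        have h2 : m x * ⟪a x j, a x (jm x)⟫ ≤ -m x := by nlinarith [hm0 x]
        have h3 : -m x ≤ b x j / (1 + c x j) := by rw [hmval]; exact hk.2
        have hcj := hc1 x hx j
        have h4 : -m x * (1 + c x j) ≤ b x j := (le_div_iff₀ hcj).mp h3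
        nlinarith [(hcrange x hx j).1, hm0 x]
    · have hmval : m x = 0 := min_eq_right hpos
      have hρ0 : ρ x = 0 := by show m x • a x (jm x) = 0; rw [hmval, zero_smul]
      rw [hρ0, hmval]
      simp only [inner_zero_right, neg_zero, mul_zero, add_zero]
      exact hbpos x hx j (le_trans hpos (hjm x j))
  -- ============ Lipschitz part ============
  set L : ℝ := (Kb : ℝ) / γ + M * (Kc : ℝ) / γ ^ 2 with hLdef
  have hL0 : 0 ≤ L := by positivity
  have hβlip : ∀ x ∈ X, ∀ y ∈ X, ∀ j, |β x j - β y j| ≤ L * dist x y := by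
    intro x hx y hy j
    have hb' : |b x j - b y j| ≤ (Kb : ℝ) * dist x y := by
      have := lipschitzOnWith_iff_dist_le_mul.mp (hb_lip j) x hx y hy
      rwa [Real.dist_eq] at this
    have hc' : |c x j - c y j| ≤ (Kc : ℝ) * dist x y := by
      have := lipschitzOnWith_iff_dist_le_mul.mp (hc_lip j) x hx y hy
      rwa [Real.dist_eq] at this
    have := stmt12_aux_div (b x j) (b y j) (c x j) (c y j) γ M
      ((Kb : ℝ) * dist x y) ((Kc : ℝ) * dist x y) hγ (hcγ x hx j) (hcγ y hy j)
      (hM y hy j) hb' hc'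
    calc |β x j - β y j| ≤ (Kb:ℝ) * dist x y / γ + M * ((Kc:ℝ) * dist x y) / γ ^ 2 := this
      _ = L * dist x y := by rw [hLdef]; ring
  have hmlip : ∀ x ∈ X, ∀ y ∈ X, |m x - m y| ≤ L * dist x y := by
    intro x hx y hy
    have key : ∀ p ∈ X, ∀ q ∈ X, m p - m q ≤ L * dist p q := by
      intro p hp q hq
      have h1 : m p ≤ min (β p (jm q)) 0 := min_le_min (hjm p (jm q)) le_rfl
      have h2 : min (β p (jm q)) 0 - m q ≤ |β p (jm q) - β q (jm q)| := by
        have := abs_min_sub_min_le_max (β p (jm q)) 0 (β q (jm q)) 0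
        simp only [sub_self, abs_zero] at this
        have h3 : |min (β p (jm q)) 0 - min (β q (jm q)) 0| ≤ |β p (jm q) - β q (jm q)| := by
          refine le_trans this ?_
          simp [max_le_iff, abs_nonneg]
        exact le_trans (le_abs_self _) h3
      have := hβlip p hp q hq (jm q)
      have hmq : m q = min (β q (jm q)) 0 := rfl
      linarith [h1, h2, this]
    rcases abs_sub_le_iff.mpr ⟨key x hx y hy, by rw [dist_comm]; exact key y hy x hx⟩ with h
    exact h
  have hmbd : ∀ x ∈ X, -m x ≤ M / γ := by
    intro x hx
    rcases lt_or_ge (β x (jm x)) 0 with hneg | hpos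
    · have hmval : m x = β x (jm x) := min_eq_left hneg.le
      rw [hmval]
      have hb' : -b x (jm x) ≤ M := by
        have := hM x hx (jm x); rw [abs_le] at this; linarith [this.1]
      have : -β x (jm x) = (-b x (jm x)) / (1 - c x (jm x)) := by
        rw [hβdef]; ring
      rw [this]
      exact div_le_div₀ hM0 hb' hγ (hcγ x hx (jm x))
    · have hmval : m x = 0 := min_eq_right hpos
      rw [hmval, neg_zero]
      positivity
  set KR : ℝ := 3 * L + (M / γ) * (Ka : ℝ) with hKRdef
  have hKR0 : 0 ≤ KR := by positivity
  have hmain : ∀ x ∈ X, ∀ y ∈ X, dist (ρ x) (ρ y) ≤ KR * dist x y := by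
    intro x hx y hy
    have hd0 : 0 ≤ dist x y := dist_nonneg
    have hml := hmlip x hx y hy
    have hKa0 : (0:ℝ) ≤ (Ka : ℝ) := Ka.coe_nonneg
    have hLKR : L ≤ KR := by
      have h1 : (0:ℝ) ≤ (M / γ) * (Ka : ℝ) := by positivity
      rw [hKRdef]; linarith
    have h2LKR : 2 * L ≤ KR := by
      have h1 : (0:ℝ) ≤ (M / γ) * (Ka : ℝ) := by positivity
      rw [hKRdef]; linarith
    rcases eq_or_lt_of_le (hm0 x) with hx0 | hxneg
    · -- m x = 0, ρ x = 0
      have hρx : ρ x = 0 := by show m x • a x (jm x) = 0; rw [hx0, zero_smul]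
      rw [dist_eq_norm, hρx, zero_sub, norm_neg, hρnorm y hy]
      have heq : -m y = m x - m y := by rw [hx0]; ring
      rw [heq]
      calc m x - m y ≤ |m x - m y| := le_abs_self _
        _ ≤ L * dist x y := hml
        _ ≤ KR * dist x y := mul_le_mul_of_nonneg_right hLKR hd0
    rcases eq_or_lt_of_le (hm0 y) with hy0 | hyneg
    · -- m y = 0, ρ y = 0
      have hρy : ρ y = 0 := by show m y • a y (jm y) = 0; rw [hy0, zero_smul]
      rw [dist_eq_norm, hρy, sub_zero, hρnorm x hx]
      have heq : -m x = m y - m x := by rw [hy0]; ring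
      rw [heq]
      calc m y - m x ≤ |m y - m x| := le_abs_self _
        _ = |m x - m y| := abs_sub_comm _ _
        _ ≤ L * dist x y := hml
        _ ≤ KR * dist x y := mul_le_mul_of_nonneg_right hLKR hd0
    -- both m x < 0, m y < 0
    have hβx : β x (jm x) = m x := by
      have : β x (jm x) < 0 := by
        by_contra h; push_neg at h
        have : m x = 0 := by
          rw [hmdef]; exact min_eq_right h
        linarith
      exact (min_eq_left this.le).symm
    have hβy : β y (jm y) = m y := by
      have : β y (jm y) < 0 := by
        by_contra h; push_neg at h
        have : m y = 0 := by
          rw [hmdef]; exact min_eq_right h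
        linarith
      exact (min_eq_left this.le).symm
    by_cases hj : jm x = jm y
    · -- same active index
      have halip : ‖a x (jm x) - a y (jm x)‖ ≤ (Ka : ℝ) * dist x y := by
        have := lipschitzOnWith_iff_dist_le_mul.mp (ha_lip (jm x)) x hx y hy
        rwa [dist_eq_norm] at this
      have hmy : -m y ≤ M / γ := hmbd y hy
      have hsplit : ρ x - ρ y = (m x - m y) • a x (jm x) + m y • (a x (jm x) - a y (jm x)) := by
        show m x • a x (jm x) - m y • a y (jm y) = _
        rw [← hj, smul_sub, sub_smul]
        abel
      rw [dist_eq_norm, hsplit]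
      calc ‖(m x - m y) • a x (jm x) + m y • (a x (jm x) - a y (jm x))‖
          ≤ ‖(m x - m y) • a x (jm x)‖ + ‖m y • (a x (jm x) - a y (jm x))‖ := norm_add_le _ _
        _ = |m x - m y| * ‖a x (jm x)‖ + |m y| * ‖a x (jm x) - a y (jm x)‖ := by
            rw [norm_smul, norm_smul, Real.norm_eq_abs, Real.norm_eq_abs]
        _ ≤ L * dist x y + (M / γ) * ((Ka : ℝ) * dist x y) := by
            apply add_le_add
            · rw [hunit x hx, mul_one]; exact hml
            · apply mul_le_mul _ halip (norm_nonneg _) (by positivity)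
              rw [abs_of_nonpos (hm0 y)]; exact hmy
        _ ≤ KR * dist x y := by
            rw [hKRdef]
            nlinarith [mul_nonneg hL0 hd0]
    · -- active index switches: both norms are small
      have hβyx : 0 ≤ β y (jm x) := by
        by_contra h; push_neg at h
        exact hj (huniq y hy (jm x) (jm y) h (by rw [hβy]; exact hyneg))
      have hβxy : 0 ≤ β x (jm y) := by
        by_contra h; push_neg at h
        exact hj (huniq x hx (jm y) (jm x) h (by rw [hβx]; exact hxneg)).symm
      have hbx : -m x ≤ L * dist x y := by
        have h1 := hβlip x hx y hy (jm x)
        have := (abs_le.mp h1).1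
        rw [hβx] at this
        linarith [hβyx]
      have hby : -m y ≤ L * dist x y := by
        have h1 := hβlip x hx y hy (jm y)
        have := (abs_le.mp h1).2
        rw [hβy] at this
        linarith [hβxy]
      calc dist (ρ x) (ρ y) ≤ ‖ρ x‖ + ‖ρ y‖ := by
            rw [dist_eq_norm]; exact norm_sub_le _ _
        _ = -m x + -m y := by rw [hρnorm x hx, hρnorm y hy]
        _ ≤ L * dist x y + L * dist x y := add_le_add hbx hby
        _ = 2 * L * dist x y := by ring
        _ ≤ KR * dist x y := mul_le_mul_of_nonneg_right h2LKR hd0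
  refine ⟨ρ, fun x hx => ⟨hfeas x hx, hmin x hx, huniqmin x hx, hUc x hx⟩,
    KR.toNNReal, ?_⟩
  rw [lipschitzOnWith_iff_dist_le_mul]
  intro x hx y hy
  rw [Real.coe_toNNReal KR hKR0]
  exact hmain x hx y hy
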